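/- Let ρ(z) = (z+1)^{1+β} - z^{1+β} - 1 with 0 < β < 1, and let r_*(y) = ((2^β - 1)ρ(y)/(ρ(2y) - ρ(y)))^{1/(1-β)}. Then for all y > 0 and all x with r_*(y) ≤ x < 1, one has ρ(x)/(2x) < (ρ(xy+y) - ρ(y))/(x ρ(y)). -/

import Mathlib

open Real Set

private lemma hasDerivAt_R (β : ℝ) (hβ : 0 ≤ β) (z : ℝ) :
    HasDerivAt (fun z : ℝ => (z + 1) ^ (1 + β) - z ^ (1 + β) - 1)
      ((1 + β) * ((z + 1) ^ β - z ^ β)) z := by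
  have h1 : HasDerivAt (fun z : ℝ => (z + 1) ^ (1 + β)) (1 * (1 + β) * (z + 1) ^ (1 + β - 1)) z :=
    ((hasDerivAt_id z).add_const 1).rpow_const (Or.inr (by linarith))
  have h2 : HasDerivAt (fun z : ℝ => z ^ (1 + β)) (1 * (1 + β) * z ^ (1 + β - 1)) z :=
    (hasDerivAt_id z).rpow_const (Or.inr (by linarith))
  have h : HasDerivAt (fun z : ℝ => (z + 1) ^ (1 + β) - z ^ (1 + β) - 1)
      (1 * (1 + β) * (z + 1) ^ (1 + β - 1) - 1 * (1 + β) * z ^ (1 + β - 1)) z :=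
    (h1.sub h2).sub_const 1
  have he : (1 : ℝ) + β - 1 = β := by ring
  rw [he] at h
  convert h using 1
  ring

private lemma R_cont (β : ℝ) (hβ : 0 ≤ β) :
    Continuous (fun z : ℝ => (z + 1) ^ (1 + β) - z ^ (1 + β) - 1) := by
  have : Differentiable ℝ (fun z : ℝ => (z + 1) ^ (1 + β) - z ^ (1 + β) - 1) :=
    fun z => (hasDerivAt_R β hβ z).differentiableAt
  exact this.continuous

private lemma R_strictMono (β : ℝ) (hβ0 : 0 < β) :
    StrictMonoOn (fun z : ℝ => (z + 1) ^ (1 + β) - z ^ (1 + β) - 1) (Ici 0) := by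
  apply strictMonoOn_of_deriv_pos (convex_Ici 0) ((R_cont β hβ0.le).continuousOn)
  intro z hz
  rw [interior_Ici] at hz
  rw [(hasDerivAt_R β hβ0.le z).deriv]
  have h : z ^ β < (z + 1) ^ β := Real.rpow_lt_rpow hz.le (by linarith) hβ0
  nlinarith

/-- `H a = (1+β)·a·((a+1)^β - a^β) - β·ρ(a) ≥ 0` for `a ≥ 0`. -/
private lemma H_nonneg (β : ℝ) (hβ0 : 0 < β) (hβ1 : β < 1) {a0 : ℝ} (ha0 : 0 ≤ a0) :
    0 ≤ (1 + β) * (a0 * ((a0 + 1) ^ β - a0 ^ β)) - β * ((a0 + 1) ^ (1 + β) - a0 ^ (1 + β) - 1) := by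
  set H : ℝ → ℝ := fun a =>
    (1 + β) * (a * ((a + 1) ^ β - a ^ β)) - β * ((a + 1) ^ (1 + β) - a ^ (1 + β) - 1) with hH
  have hder : ∀ a : ℝ, 0 < a → HasDerivAt H
      ((1 + β) * (1 * ((a + 1) ^ β - a ^ β) +
          a * (1 * β * (a + 1) ^ (β - 1) - 1 * β * a ^ (β - 1))) -
        β * ((1 + β) * ((a + 1) ^ β - a ^ β))) a := by
    intro a ha
    have h1 : HasDerivAt (fun a : ℝ => (a + 1) ^ β) (1 * β * (a + 1) ^ (β - 1)) a :=
      ((hasDerivAt_id a).add_const 1).rpow_const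
        (Or.inl (by intro h; simp only [id_eq] at h; linarith))
    have h2 : HasDerivAt (fun a : ℝ => a ^ β) (1 * β * a ^ (β - 1)) a :=
      (hasDerivAt_id a).rpow_const (Or.inl (by intro h; simp only [id_eq] at h; linarith))
    exact (((hasDerivAt_id a).mul (h1.sub h2)).const_mul (1 + β)).sub
      ((hasDerivAt_R β hβ0.le a).const_mul β)
  have hcont : Continuous H := by
    have cb : ∀ p : ℝ, 0 ≤ p → Continuous (fun a : ℝ => a ^ p) := fun p hp =>
      continuous_iff_continuousAt.2 fun x => Real.continuousAt_rpow_const x p (Or.inr hp)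
    have c1 : Continuous (fun a : ℝ => (a + 1) ^ β) :=
      (cb β hβ0.le).comp (continuous_id.add continuous_const)
    have c3 : Continuous (fun a : ℝ => (a + 1) ^ (1 + β)) :=
      (cb (1 + β) (by linarith)).comp (continuous_id.add continuous_const)
    exact ((continuous_const.mul (continuous_id.mul (c1.sub (cb β hβ0.le)))).sub
      (continuous_const.mul ((c3.sub (cb (1 + β) (by linarith))).sub continuous_const)))
  have hmono : MonotoneOn H (Ici 0) := by
    apply monotoneOn_of_deriv_nonneg (convex_Ici 0) hcont.continuousOn
    · intro a haI
      rw [interior_Ici] at haI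
      exact (hder a haI).differentiableAt.differentiableWithinAt
    · intro a haI
      rw [interior_Ici] at haI
      have ha : (0 : ℝ) < a := haI
      rw [(hder a ha).deriv]
      have hap : (0 : ℝ) < a + 1 := by linarith
      have e1 : a ^ (β - 1) * a = a ^ β := by
        rw [← Real.rpow_add_one ha.ne' (β - 1)]; norm_num
      have e2 : (a + 1) ^ (β - 1) * (a + 1) = (a + 1) ^ β := by
        rw [← Real.rpow_add_one hap.ne' (β - 1)]; norm_num
      have amgm : a ^ β * (a + 1) ^ (1 - β) ≤ β * a + (1 - β) * (a + 1) :=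
        Real.geom_mean_le_arith_mean2_weighted hβ0.le (by linarith) ha.le hap.le (by ring)
      have e3 : (a + 1) ^ (1 - β) * (a + 1) ^ (β - 1) = 1 := by
        rw [← Real.rpow_add hap]; norm_num
      have hpp : (0 : ℝ) < (a + 1) ^ (β - 1) := Real.rpow_pos_of_pos hap _
      have key : a ^ β ≤ (β * a + (1 - β) * (a + 1)) * (a + 1) ^ (β - 1) := by
        have h := mul_le_mul_of_nonneg_right amgm hpp.le
        calc a ^ β = a ^ β * ((a + 1) ^ (1 - β) * (a + 1) ^ (β - 1)) := by rw [e3]; ring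
          _ = a ^ β * (a + 1) ^ (1 - β) * (a + 1) ^ (β - 1) := by ring
          _ ≤ (β * a + (1 - β) * (a + 1)) * (a + 1) ^ (β - 1) := h
      have expand : (1 + β) * (1 * ((a + 1) ^ β - a ^ β) +
            a * (1 * β * (a + 1) ^ (β - 1) - 1 * β * a ^ (β - 1))) -
            β * ((1 + β) * ((a + 1) ^ β - a ^ β)) =
          (1 + β) * ((β * a + (1 - β) * (a + 1)) * (a + 1) ^ (β - 1) - a ^ β) := by
        linear_combination (-(1 + β) * (1 - β)) * e2 + (-(1 + β) * β) * e1
      rw [expand]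
      have : (0 : ℝ) ≤ (β * a + (1 - β) * (a + 1)) * (a + 1) ^ (β - 1) - a ^ β := by
        linarith [key]
      nlinarith [this]
  have h0 : H 0 = 0 := by
    simp [hH, Real.zero_rpow (by positivity : (1 : ℝ) + β ≠ 0), Real.one_rpow]
  have h := hmono (self_mem_Ici) (mem_Ici.2 ha0) ha0
  rw [h0] at h
  exact h

/-- `ρ(x) ≤ 2(2^β - 1) x^β` for `0 < x ≤ 1`. -/
private lemma R_le (β : ℝ) (hβ0 : 0 < β) (hβ1 : β < 1) {x : ℝ} (hx0 : 0 < x) (hx1 : x ≤ 1) :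
    (x + 1) ^ (1 + β) - x ^ (1 + β) - 1 ≤ 2 * ((2 : ℝ) ^ β - 1) * x ^ β := by
  set f : ℝ → ℝ := fun a => ((a + 1) ^ (1 + β) - a ^ (1 + β) - 1) * a ^ (-β) with hf
  have hder : ∀ a : ℝ, 0 < a → HasDerivAt f
      ((1 + β) * ((a + 1) ^ β - a ^ β) * a ^ (-β) +
        ((a + 1) ^ (1 + β) - a ^ (1 + β) - 1) * (1 * (-β) * a ^ (-β - 1))) a := by
    intro a ha
    exact (hasDerivAt_R β hβ0.le a).mul
      ((hasDerivAt_id a).rpow_const (Or.inl (by intro h; simp only [id_eq] at h; linarith)))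
  have hmono : MonotoneOn f (Ioi 0) := by
    apply monotoneOn_of_deriv_nonneg (convex_Ioi 0)
    · intro a haI
      exact ((hder a haI).differentiableAt).continuousAt.continuousWithinAt
    · intro a haI
      rw [interior_Ioi] at haI
      exact (hder a haI).differentiableAt.differentiableWithinAt
    · intro a haI
      rw [interior_Ioi] at haI
      have ha : (0 : ℝ) < a := haI
      rw [(hder a ha).deriv]
      have e : a ^ (-β) = a ^ (-β - 1) * a := by
        rw [← Real.rpow_add_one ha.ne' (-β - 1)]; norm_num
      have hH := H_nonneg β hβ0 hβ1 ha.le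
      have hpp : (0 : ℝ) < a ^ (-β - 1) := Real.rpow_pos_of_pos ha _
      have val : (1 + β) * ((a + 1) ^ β - a ^ β) * a ^ (-β) +
          ((a + 1) ^ (1 + β) - a ^ (1 + β) - 1) * (1 * (-β) * a ^ (-β - 1)) =
          a ^ (-β - 1) * ((1 + β) * (a * ((a + 1) ^ β - a ^ β)) -
            β * ((a + 1) ^ (1 + β) - a ^ (1 + β) - 1)) := by
        rw [e]; ring
      rw [val]
      exact mul_nonneg hpp.le hH
  have h1 : f x ≤ f 1 := hmono (mem_Ioi.2 hx0) (mem_Ioi.2 one_pos) hx1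
  have hf1 : f 1 = 2 * ((2 : ℝ) ^ β - 1) := by
    have h2 : f 1 = ((2 : ℝ) ^ (1 + β) - (1 : ℝ) ^ (1 + β) - 1) * (1 : ℝ) ^ (-β) := by
      rw [hf]; norm_num
    rw [h2, Real.one_rpow, Real.one_rpow,
      Real.rpow_add (by norm_num : (0 : ℝ) < 2), Real.rpow_one]
    ring
  rw [hf1] at h1
  have hxb : (0 : ℝ) < x ^ β := Real.rpow_pos_of_pos hx0 _
  have e : x ^ (-β) * x ^ β = 1 := by
    rw [← Real.rpow_add hx0]; norm_num
  have h3 := mul_le_mul_of_nonneg_right h1 hxb.le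
  calc (x + 1) ^ (1 + β) - x ^ (1 + β) - 1
      = ((x + 1) ^ (1 + β) - x ^ (1 + β) - 1) * (x ^ (-β) * x ^ β) := by rw [e]; ring
    _ = f x * x ^ β := by rw [hf]; ring
    _ ≤ 2 * ((2 : ℝ) ^ β - 1) * x ^ β := h3

private lemma R_strictConcave (β : ℝ) (hβ0 : 0 < β) (hβ1 : β < 1) :
    StrictConcaveOn ℝ (Ici 0) (fun z : ℝ => (z + 1) ^ (1 + β) - z ^ (1 + β) - 1) := by
  apply strictConcaveOn_of_deriv2_neg (convex_Ici 0) ((R_cont β hβ0.le).continuousOn)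
  intro z hz
  rw [interior_Ici] at hz
  have hd : deriv (fun z : ℝ => (z + 1) ^ (1 + β) - z ^ (1 + β) - 1) =
      fun z => (1 + β) * ((z + 1) ^ β - z ^ β) :=
    funext fun z => (hasDerivAt_R β hβ0.le z).deriv
  show deriv (deriv fun z : ℝ => (z + 1) ^ (1 + β) - z ^ (1 + β) - 1) z < 0
  rw [hd]
  have h1 : HasDerivAt (fun z : ℝ => (z + 1) ^ β) (1 * β * (z + 1) ^ (β - 1)) z :=
    ((hasDerivAt_id z).add_const 1).rpow_const
      (Or.inl (by intro h; simp only [id_eq] at h; have : (0:ℝ) < z := hz; linarith))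
  have h2 : HasDerivAt (fun z : ℝ => z ^ β) (1 * β * z ^ (β - 1)) z :=
    (hasDerivAt_id z).rpow_const (Or.inl (by
      intro h
      simp only [id_eq] at h
      have : (0:ℝ) < z := hz
      linarith))
  rw [(by exact ((h1.sub h2).const_mul (1 + β)) : HasDerivAt (fun z : ℝ => (1 + β) * ((z + 1) ^ β - z ^ β)) _ z).deriv]
  have hlt : (z + 1) ^ (β - 1) < z ^ (β - 1) :=
    Real.rpow_lt_rpow_of_neg hz (by linarith) (by linarith)
  have hprod : (0 : ℝ) < (1 + β) * β * (z ^ (β - 1) - (z + 1) ^ (β - 1)) := by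
    apply mul_pos (by nlinarith) (by linarith)
  nlinarith [hprod]

/-- With `ρ(z) = (z+1)^{1+β} - z^{1+β} - 1` and
`r_*(y) = ((2^β - 1)ρ(y)/(ρ(2y) - ρ(y)))^{1/(1-β)}`, for `y > 0` and `r_*(y) ≤ x < 1`,
`ρ(x)/(2x) < (ρ(xy+y) - ρ(y))/(x ρ(y))`. -/
theorem rho_rstar_ineq (β : ℝ) (hβ0 : 0 < β) (hβ1 : β < 1)
    (ρ rstar : ℝ → ℝ)
    (hρ : ∀ z : ℝ, ρ z = (z + 1) ^ (1 + β) - z ^ (1 + β) - 1)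
    (hr : ∀ y : ℝ,
      rstar y = (((2 : ℝ) ^ β - 1) * ρ y / (ρ (2 * y) - ρ y)) ^ (1 / (1 - β)))
    (x y : ℝ) (hy : 0 < y) (hx1 : rstar y ≤ x) (hx2 : x < 1) :
    ρ x / (2 * x) < (ρ (x * y + y) - ρ y) / (x * ρ y) := by
  have hρ' : ρ = fun z : ℝ => (z + 1) ^ (1 + β) - z ^ (1 + β) - 1 := funext hρ
  -- transfer facts about the explicit function to ρ
  have hsm : StrictMonoOn ρ (Ici 0) := by rw [hρ']; exact R_strictMono β hβ0
  have hR0 : ρ 0 = 0 := by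
    rw [hρ 0]
    simp [Real.zero_rpow (by positivity : (1 : ℝ) + β ≠ 0), Real.one_rpow]
  have hcc : StrictConcaveOn ℝ (Ici 0) ρ := by rw [hρ']; exact R_strictConcave β hβ0 hβ1
  have hRle : ∀ a : ℝ, 0 < a → a ≤ 1 → ρ a ≤ 2 * ((2 : ℝ) ^ β - 1) * a ^ β := by
    intro a h1 h2; rw [hρ a]; exact R_le β hβ0 hβ1 h1 h2
  clear hρ hρ'
  -- basic positivity facts
  have hRy : 0 < ρ y := by
    have h := hsm self_mem_Ici (mem_Ici.2 hy.le) hy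
    rwa [hR0] at h
  have hR2y : ρ y < ρ (2 * y) :=
    hsm (mem_Ici.2 hy.le) (mem_Ici.2 (by linarith)) (by linarith)
  have h2β : (1 : ℝ) < 2 ^ β := by
    have h := Real.rpow_lt_rpow_of_exponent_lt (by norm_num : (1 : ℝ) < 2) hβ0
    rwa [Real.rpow_zero] at h
  have hApos : 0 < ((2 : ℝ) ^ β - 1) * ρ y / (ρ (2 * y) - ρ y) :=
    div_pos (mul_pos (by linarith) hRy) (by linarith)
  rw [hr y] at hx1
  have hx0 : 0 < x := lt_of_lt_of_le (Real.rpow_pos_of_pos hApos _) hx1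
  -- from the rstar condition
  have F2 : ((2 : ℝ) ^ β - 1) * ρ y / (ρ (2 * y) - ρ y) ≤ x ^ (1 - β) := by
    have h1 : ((((2 : ℝ) ^ β - 1) * ρ y / (ρ (2 * y) - ρ y)) ^ (1 / (1 - β))) ^ (1 - β)
        ≤ x ^ (1 - β) :=
      Real.rpow_le_rpow (Real.rpow_nonneg hApos.le _) hx1 (by linarith)
    rwa [← Real.rpow_mul hApos.le, one_div_mul_cancel (by linarith : (1 : ℝ) - β ≠ 0),
      Real.rpow_one] at h1
  have F2' : ((2 : ℝ) ^ β - 1) * ρ y ≤ x ^ (1 - β) * (ρ (2 * y) - ρ y) :=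
    (div_le_iff₀ (by linarith)).1 F2
  have hxb : (0 : ℝ) < x ^ β := Real.rpow_pos_of_pos hx0 _
  have exx : x ^ (1 - β) * x ^ β = x := by
    rw [← Real.rpow_add hx0]; norm_num
  have F2'' : ((2 : ℝ) ^ β - 1) * ρ y * x ^ β ≤ x * (ρ (2 * y) - ρ y) := by
    have h := mul_le_mul_of_nonneg_right F2' hxb.le
    calc ((2 : ℝ) ^ β - 1) * ρ y * x ^ β
        ≤ x ^ (1 - β) * (ρ (2 * y) - ρ y) * x ^ β := h
      _ = x ^ (1 - β) * x ^ β * (ρ (2 * y) - ρ y) := by ring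
      _ = x * (ρ (2 * y) - ρ y) := by rw [exx]
  have F3 : ρ x ≤ 2 * ((2 : ℝ) ^ β - 1) * x ^ β := hRle x hx0 hx2.le
  -- strict concavity step
  have hconc := hcc.2 (mem_Ici.2 hy.le) (mem_Ici.2 (by linarith : (0 : ℝ) ≤ 2 * y))
    (ne_of_lt (by linarith : y < 2 * y)) (by linarith : (0 : ℝ) < 1 - x) hx0 (by ring)
  rw [smul_eq_mul, smul_eq_mul, smul_eq_mul, smul_eq_mul] at hconc
  have harg : (1 - x) * y + x * (2 * y) = x * y + y := by ring
  rw [harg] at hconc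
  have F1 : x * (ρ (2 * y) - ρ y) < ρ (x * y + y) - ρ y := by nlinarith [hconc]
  have F3' : ρ x * ρ y ≤ 2 * ((2 : ℝ) ^ β - 1) * x ^ β * ρ y :=
    mul_le_mul_of_nonneg_right F3 hRy.le
  have KEY : ρ x / 2 * ρ y < ρ (x * y + y) - ρ y := by nlinarith [F1, F2'', F3']
  rw [div_lt_div_iff₀ (by linarith) (mul_pos hx0 hRy)]
  have h2x : (0 : ℝ) < 2 * x := by linarith
  calc ρ x * (x * ρ y) = (ρ x / 2 * ρ y) * (2 * x) := by ring
    _ < (ρ (x * y + y) - ρ y) * (2 * x) := mul_lt_mul_of_pos_right KEY h2x
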